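/- If A_1, ..., A_s are pairwise disjoint subsets of the natural numbers whose union is all of ℕ, and the sum of their Buck measure densities μ*(A_1) + ... + μ*(A_s) is at most 1, then each A_i is Buck measurable (i.e., μ*(A_i) + μ*(ℕ \ A_i) = 1 for each i). -/

import Mathlib

open scoped BigOperators

noncomputable def buckDensity (S : Set ℕ) : ℝ :=
  sInf {x : ℝ | ∃ (k : ℕ) (r D : Fin k → ℕ), (∀ j, 0 < D j) ∧
    (S ⊆ ⋃ j, {n : ℕ | n % D j = r j % D j}) ∧ x = ∑ j, (1 : ℝ) / (D j : ℝ)}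

def buckSet (S : Set ℕ) : Set ℝ :=
  {x : ℝ | ∃ (k : ℕ) (r D : Fin k → ℕ), (∀ j, 0 < D j) ∧
    (S ⊆ ⋃ j, {n : ℕ | n % D j = r j % D j}) ∧ x = ∑ j, (1 : ℝ) / (D j : ℝ)}

lemma buckDensity_eq (S : Set ℕ) : buckDensity S = sInf (buckSet S) := rfl

lemma one_mem_buckSet (S : Set ℕ) : (1:ℝ) ∈ buckSet S := by
  refine ⟨1, fun _ => 0, fun _ => 1, fun j => one_pos, ?_, by simp⟩
  intro n _
  exact Set.mem_iUnion.2 ⟨0, by simp [Nat.mod_one]⟩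

lemma buckSet_nonneg (S : Set ℕ) : ∀ x ∈ buckSet S, (0:ℝ) ≤ x := by
  rintro x ⟨k, r, D, hD, hcov, rfl⟩
  exact Finset.sum_nonneg fun j _ => by positivity

lemma buckSet_bddBelow (S : Set ℕ) : BddBelow (buckSet S) :=
  ⟨0, buckSet_nonneg S⟩

lemma buckDensity_nonneg (S : Set ℕ) : 0 ≤ buckDensity S :=
  le_csInf ⟨1, one_mem_buckSet S⟩ (buckSet_nonneg S)

lemma buckDensity_mono {S T : Set ℕ} (h : S ⊆ T) : buckDensity S ≤ buckDensity T := by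
  refine csInf_le_csInf (buckSet_bddBelow S) ⟨1, one_mem_buckSet T⟩ ?_
  rintro x ⟨k, r, D, hD, hcov, rfl⟩
  exact ⟨k, r, D, hD, h.trans hcov, rfl⟩

lemma buckDensity_empty : buckDensity (∅ : Set ℕ) = 0 := by
  refine le_antisymm ?_ (buckDensity_nonneg _)
  refine csInf_le (buckSet_bddBelow _) ?_
  exact ⟨0, Fin.elim0, Fin.elim0, fun j => j.elim0, by simp, by simp⟩

lemma add_mem_buckSet {S T : Set ℕ} {x y : ℝ} (hx : x ∈ buckSet S) (hy : y ∈ buckSet T) :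
    x + y ∈ buckSet (S ∪ T) := by
  obtain ⟨k₁, r₁, D₁, hD₁, hc₁, rfl⟩ := hx
  obtain ⟨k₂, r₂, D₂, hD₂, hc₂, rfl⟩ := hy
  refine ⟨k₁ + k₂, Fin.append r₁ r₂, Fin.append D₁ D₂, ?_, ?_, ?_⟩
  · intro j
    refine Fin.addCases (fun i => ?_) (fun i => ?_) j
    · rw [Fin.append_left]; exact hD₁ i
    · rw [Fin.append_right]; exact hD₂ i
  · rintro n (hn | hn)
    · obtain ⟨j, hj⟩ := Set.mem_iUnion.1 (hc₁ hn)
      exact Set.mem_iUnion.2 ⟨Fin.castAdd k₂ j, by simpa [Fin.append_left] using hj⟩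
    · obtain ⟨j, hj⟩ := Set.mem_iUnion.1 (hc₂ hn)
      exact Set.mem_iUnion.2 ⟨Fin.natAdd k₁ j, by simpa [Fin.append_right] using hj⟩
  · rw [Fin.sum_univ_add]
    simp [Fin.append_left, Fin.append_right]

lemma buckDensity_union (S T : Set ℕ) :
    buckDensity (S ∪ T) ≤ buckDensity S + buckDensity T := by
  rw [buckDensity_eq S, buckDensity_eq T]
  rw [← sub_le_iff_le_add]
  refine le_csInf ⟨1, one_mem_buckSet S⟩ fun x hx => ?_
  rw [sub_le_iff_le_add, add_comm, ← sub_le_iff_le_add]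
  refine le_csInf ⟨1, one_mem_buckSet T⟩ fun y hy => ?_
  rw [sub_le_iff_le_add']
  exact csInf_le (buckSet_bddBelow _) (add_mem_buckSet hx hy)

lemma buckDensity_biUnion {ι : Type*} (A : ι → Set ℕ) (t : Finset ι) :
    buckDensity (⋃ i ∈ t, A i) ≤ ∑ i ∈ t, buckDensity (A i) := by
  classical
  induction t using Finset.induction with
  | empty => simp [buckDensity_empty]
  | @insert a t ha ih =>
    rw [Finset.sum_insert ha]
    calc buckDensity (⋃ i ∈ insert a t, A i)
        = buckDensity (A a ∪ ⋃ i ∈ t, A i) := by rw [Finset.set_biUnion_insert]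
      _ ≤ buckDensity (A a) + buckDensity (⋃ i ∈ t, A i) := buckDensity_union _ _
      _ ≤ _ := by linarith

lemma card_filter_mod_le (N D a : ℕ) (hD : 0 < D) (hdvd : D ∣ N) :
    ((Finset.range N).filter (fun n => n % D = a)).card ≤ N / D := by
  have : ((Finset.range N).filter (fun n => n % D = a)).card ≤ (Finset.range (N / D)).card := by
    refine Finset.card_le_card_of_injOn (fun n => n / D) ?_ ?_
    · intro n hn
      simp only [Finset.coe_filter, Finset.mem_coe, Set.mem_setOf_eq, Finset.mem_filter, Finset.mem_range] at hn ⊢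
      exact Nat.div_lt_div_of_lt_of_dvd hdvd hn.1
    · intro m hm n hn h
      simp only [Finset.coe_filter, Set.mem_setOf_eq, Finset.mem_range] at hm hn
      have h' : m / D = n / D := h
      have h1 := Nat.div_add_mod m D
      rw [h'] at h1
      have h2 := Nat.div_add_mod n D
      omega
  simpa using this

lemma one_le_buckDensity_univ : (1:ℝ) ≤ buckDensity (Set.univ : Set ℕ) := by
  refine le_csInf ⟨1, one_mem_buckSet _⟩ ?_
  rintro x ⟨k, r, D, hD, hcov, rfl⟩
  set N : ℕ := ∏ j, D j with hN
  have hNpos : 0 < N := Finset.prod_pos fun j _ => hD j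
  have hdvd : ∀ j : Fin k, D j ∣ N := fun j => Finset.dvd_prod_of_mem D (Finset.mem_univ j)
  -- range N covered by the filters
  have hsub : Finset.range N ⊆ Finset.univ.biUnion
      (fun j => (Finset.range N).filter (fun n => n % D j = r j % D j)) := by
    intro n hn
    obtain ⟨j, hj⟩ := Set.mem_iUnion.1 (hcov (Set.mem_univ n))
    exact Finset.mem_biUnion.2 ⟨j, Finset.mem_univ j, Finset.mem_filter.2 ⟨hn, hj⟩⟩
  have hcard : N ≤ ∑ j, N / D j := by
    calc N = (Finset.range N).card := (Finset.card_range N).symm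
      _ ≤ (Finset.univ.biUnion
          (fun j => (Finset.range N).filter (fun n => n % D j = r j % D j))).card :=
            Finset.card_le_card hsub
      _ ≤ ∑ j, ((Finset.range N).filter (fun n => n % D j = r j % D j)).card :=
            Finset.card_biUnion_le
      _ ≤ ∑ j, N / D j := Finset.sum_le_sum fun j _ => card_filter_mod_le N (D j) _ (hD j) (hdvd j)
  have hreal : (N:ℝ) ≤ ∑ j, (N:ℝ) / (D j : ℝ) := by
    calc (N:ℝ) ≤ ((∑ j, N / D j : ℕ) : ℝ) := by exact_mod_cast hcard
      _ = ∑ j, (N:ℝ) / (D j : ℝ) := by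
          rw [Nat.cast_sum]
          refine Finset.sum_congr rfl fun j _ => ?_
          rw [Nat.cast_div (hdvd j) (by exact_mod_cast (hD j).ne')]
  have : (N:ℝ) ≤ (N:ℝ) * ∑ j, (1:ℝ) / (D j : ℝ) := by
    calc (N:ℝ) ≤ ∑ j, (N:ℝ) / (D j : ℝ) := hreal
      _ = (N:ℝ) * ∑ j, (1:ℝ) / (D j : ℝ) := by
          rw [Finset.mul_sum]
          exact Finset.sum_congr rfl fun j _ => by rw [mul_one_div]
  have hNR : (0:ℝ) < N := by exact_mod_cast hNpos
  nlinarith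

def BuckMeasurable (S : Set ℕ) : Prop :=
  buckDensity S + buckDensity Sᶜ = 1

theorem stmt0 (s : ℕ) (A : Fin s → Set ℕ)
    (hdisj : Pairwise fun i j => Disjoint (A i) (A j))
    (hcover : (⋃ i, A i) = Set.univ)
    (hsum : ∑ i, buckDensity (A i) ≤ 1) :
    ∀ i, BuckMeasurable (A i) := by
  intro i
  have hcompl : (A i)ᶜ ⊆ ⋃ j ∈ Finset.univ.erase i, A j := by
    intro n hn
    have : n ∈ ⋃ j, A j := hcover ▸ Set.mem_univ n
    obtain ⟨j, hj⟩ := Set.mem_iUnion.1 this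
    have hji : j ≠ i := fun h => hn (h ▸ hj)
    exact Set.mem_biUnion (Finset.mem_erase.2 ⟨hji, Finset.mem_univ j⟩) hj
  have h1 : buckDensity (A i)ᶜ ≤ ∑ j ∈ Finset.univ.erase i, buckDensity (A j) :=
    (buckDensity_mono hcompl).trans (buckDensity_biUnion A _)
  have h2 : ∑ j ∈ Finset.univ.erase i, buckDensity (A j) + buckDensity (A i)
      = ∑ j, buckDensity (A j) := Finset.sum_erase_add _ _ (Finset.mem_univ i)
  have h3 : (1:ℝ) ≤ buckDensity (A i) + buckDensity (A i)ᶜ := by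
    calc (1:ℝ) ≤ buckDensity (Set.univ : Set ℕ) := one_le_buckDensity_univ
      _ = buckDensity (A i ∪ (A i)ᶜ) := by rw [Set.union_compl_self]
      _ ≤ buckDensity (A i) + buckDensity (A i)ᶜ := buckDensity_union _ _
  unfold BuckMeasurable
  linarith
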